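/- For nonnegative integers B, v, n with appropriate ranges, the sum over s from v to floor(n/2) of C^{B+2s}_{n-2s} equals binomial(B+n-1, n-2v), where C^m_k = ((m-k+1)/(m+1)) * binomial(m+k, k). -/

import Mathlib

/-- The Catalan triangle number `C^m_n = ((m-n+1)/(m+1)) * C(m+n, n)` as a rational. -/
def catT (m n : ℕ) : ℚ := (((m : ℚ) - n + 1) / ((m : ℚ) + 1)) * Nat.choose (m + n) n

lemma catT_zero (m : ℕ) : catT m 0 = 1 := by
  unfold catT
  have : ((m : ℚ) + 1) ≠ 0 := by positivity
  simp
  field_simp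
  exact this

lemma catT_one (m : ℕ) : catT m 1 = m := by
  unfold catT
  have h : ((m : ℚ) + 1) ≠ 0 := by positivity
  rw [Nat.choose_one_right]
  push_cast
  field_simp
  ring

lemma catT_key (M k : ℕ) :
    catT (1 + M) (k + 2)
      = (Nat.choose (M + k + 2) (k + 2) : ℚ) - Nat.choose (M + k + 2) k := by
  have h1 := Nat.choose_succ_right_eq (M + k + 3) (k + 1)
  rw [show M + k + 3 - (k + 1) = M + 2 by omega] at h1
  have h2 : (M + k + 3).choose (k + 2)
      = (M + k + 2).choose (k + 1) + (M + k + 2).choose (k + 2) :=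
    Nat.choose_succ_succ _ _
  have h3 : (M + k + 3).choose (k + 1)
      = (M + k + 2).choose k + (M + k + 2).choose (k + 1) :=
    Nat.choose_succ_succ _ _
  have h1q := congrArg (Nat.cast : ℕ → ℚ) h1
  have h2q := congrArg (Nat.cast : ℕ → ℚ) h2
  have h3q := congrArg (Nat.cast : ℕ → ℚ) h3
  push_cast at h1q h2q h3q
  unfold catT
  rw [show 1 + M + (k + 2) = M + k + 3 by ring]
  have hM' : ((1 + M : ℕ) : ℚ) + 1 ≠ 0 := by push_cast; positivity
  field_simp
  push_cast
  linear_combination ((M : ℚ) + 2) * h2q - ((M : ℚ) + 2) * h3q - h1q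

/-- `∑_{s=v}^{⌊n/2⌋} C^{B+2s}_{n-2s} = C(B+n-1, n-2v)`. -/
theorem catalan_triangle_column_sum (B v n : ℕ) (hB : 1 ≤ B) (hv : 2 * v ≤ n) :
    ∑ s ∈ Finset.Icc v (n / 2), catT (B + 2 * s) (n - 2 * s)
      = (Nat.choose (B + n - 1) (n - 2 * v) : ℚ) := by
  obtain ⟨d, hd⟩ : ∃ d, n / 2 = v + d := ⟨n / 2 - v, by omega⟩
  induction d generalizing v with
  | zero =>
    simp only [Nat.add_zero] at hd
    have hv2 : n = 2 * v ∨ n = 2 * v + 1 := by omega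
    rw [hd, Finset.Icc_self, Finset.sum_singleton]
    rcases hv2 with h | h
    · rw [show n - 2 * v = 0 by omega, catT_zero, Nat.choose_zero_right]
      norm_num
    · rw [show n - 2 * v = 1 by omega, catT_one, Nat.choose_one_right]
      push_cast [show B + n - 1 = B + 2 * v by omega]
      ring
  | succ d ih =>
    have hvle : v ≤ n / 2 := by omega
    rw [Finset.Icc_eq_cons_Ioc hvle, Finset.sum_cons, ← Finset.Icc_add_one_left_eq_Ioc,
      ih (v + 1) (by omega) (by omega)]
    obtain ⟨M, rfl⟩ : ∃ M, B = 1 + M := ⟨B - 1, by omega⟩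
    obtain ⟨k, hk⟩ : ∃ k, n - 2 * v = k + 2 := ⟨n - 2 * v - 2, by omega⟩
    rw [show (1 + M) + 2 * v = 1 + (M + 2 * v) by ring, hk, catT_key,
      show M + 2 * v + k + 2 = (1 + M) + n - 1 by omega,
      show n - 2 * (v + 1) = k by omega]
    ring
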